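/- Let q > 1 be a real number. For integers e_1, e_2, set s := min(0, e_1) + min(0, e_2), b := (min(0, e_1+1) - min(0, e_1)) + (min(0, e_2+1) - min(0, e_2)), and for integers λ_1, λ_2 ≥ 0 set F(λ_1, λ_2) := (-q)^{∑_{i∈{1,2}} ∑_{j∈{1,2}} min(0, e_i + λ_j)}. Define c_0 := -1/(q+1) and c_k := (-1)^{k+1} q^{-k} for k ≥ 1. Then for all (e_1, e_2) ∈ ℤ², s · (-q)^{2s} · ((-q)^{b-4} - (-q)^{-2}) = ∑_{k=0}^{∞} c_k · (-q)^{-4} · ( F(k, 1) - (-q)² · F(k, 0) ), where the series on the right converges absolutely. -/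

import Mathlib

/- Proposition 4.1 in explicit coordinates: the expansion of
𝓕₀'(Y, A₁^{[0]}) − (-q)^{-2}·𝓕₀'(Y, A₀^{[0]}) in terms of the functions
𝓕₀(Y, A_{λ₁⁺}) − (-q)²·𝓕₀(Y, A_λ) for λ = (k, 0). -/

/-- F(λ₁, λ₂) = (-q)^{∑_{i∈{1,2}} ∑_{j∈{1,2}} min(0, e_i + λ_j)}. -/
noncomputable def F2 (q : ℝ) (e1 e2 : ℤ) (l1 l2 : ℕ) : ℝ :=
  (-q) ^ (min 0 (e1 + (l1 : ℤ)) + min 0 (e1 + (l2 : ℤ))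
    + min 0 (e2 + (l1 : ℤ)) + min 0 (e2 + (l2 : ℤ)))

/-- The coefficients c_0 = -1/(q+1) and c_k = (-1)^{k+1} q^{-k} for k ≥ 1. -/
noncomputable def cC (q : ℝ) (k : ℕ) : ℝ :=
  if k = 0 then -1 / (q + 1) else (-1) ^ (k + 1) * q ^ (-(k : ℤ))

section Aux

variable {q : ℝ}

lemma hqne (hq : 1 < q) : (-q) ≠ 0 := by
  have : (0:ℝ) < q := lt_trans one_pos hq
  intro h
  rw [neg_eq_zero] at h
  linarith

lemma cC_succ (hq : 1 < q) (k : ℕ) : cC q (k + 1) = -(-q) ^ (-((k:ℤ) + 1)) := by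
  have hqpos : (0:ℝ) < q := lt_trans one_pos hq
  have h0 : cC q (k+1) = (-1)^(k+1+1) * q ^ (-((k+1:ℕ) : ℤ)) := by simp [cC]
  rw [h0, show (-((k:ℤ)+1)) = -(((k+1:ℕ)):ℤ) by push_cast; ring,
     zpow_neg, zpow_neg, zpow_natCast, zpow_natCast, neg_pow q (k+1), mul_inv,
     ← inv_pow (-1:ℝ) (k+1), inv_neg, inv_one]
  ring

lemma tailSum (hq : 1 < q) (N : ℕ) :
    HasSum (fun j : ℕ => cC q (j + (N + 1))) (-(-q) ^ (-(N + 1 : ℤ)) * (q / (q + 1))) := by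
  have hqpos : (0:ℝ) < q := lt_trans one_pos hq
  have hne := hqne hq
  have hq0 : q ≠ 0 := ne_of_gt hqpos
  have hq1 : q + 1 ≠ 0 := by linarith
  have hr : |(-q)⁻¹| < 1 := by
    rw [abs_inv, abs_neg, abs_of_pos hqpos, inv_lt_one_iff₀]
    right; exact hq
  have hg := (hasSum_geometric_of_abs_lt_one hr).mul_left (-(-q) ^ (-(N + 1 : ℤ)))
  have hfun : (fun j : ℕ => -(-q) ^ (-(N + 1 : ℤ)) * ((-q)⁻¹) ^ j)
      = fun j : ℕ => cC q (j + (N + 1)) := by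
    funext j
    rw [show j + (N + 1) = (j + N) + 1 by ring, cC_succ hq (j + N)]
    rw [show (-(((j + N : ℕ) : ℤ) + 1)) = (-((N:ℤ) + 1)) + (-(j:ℤ)) by push_cast; ring]
    rw [zpow_add₀ hne, zpow_neg (-q) (j:ℤ), zpow_natCast, ← inv_pow]
    ring
  rw [hfun] at hg
  convert hg using 2
  · rfl
  have h1 : (1:ℝ) - (-q)⁻¹ = (q+1)/q := by
    rw [inv_neg]
    field_simp
    ring
  rw [h1, inv_div]

lemma coreN (hq : 1 < q) (N : ℕ) :
    HasSum (fun k : ℕ => cC q k * (-q) ^ (min 0 ((k : ℤ) - (N : ℤ))))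
      (-(N : ℝ) * (-q) ^ (-(N : ℤ))) := by
  have hqpos : (0:ℝ) < q := lt_trans one_pos hq
  have hne := hqne hq
  have hq0 : q ≠ 0 := ne_of_gt hqpos
  have hq1 : q + 1 ≠ 0 := by linarith
  set f : ℕ → ℝ := fun k : ℕ => cC q k * (-q) ^ (min 0 ((k : ℤ) - (N : ℤ))) with hf
  have ht := tailSum hq N
  have htf : HasSum (fun j : ℕ => f (j + (N + 1)))
      (-(-q) ^ (-(N + 1 : ℤ)) * (q / (q + 1))) := by
    have hfun : (fun j : ℕ => f (j + (N + 1))) = fun j : ℕ => cC q (j + (N + 1)) := by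
      funext j
      simp only [hf]
      rw [show min (0:ℤ) (((j + (N + 1) : ℕ) : ℤ) - (N : ℤ)) = 0 by push_cast; omega,
        zpow_zero, mul_one]
    rw [hfun]; exact ht
  have h2 := (hasSum_nat_add_iff (f := f) (N + 1)).mp htf
  have hS : ∑ i ∈ Finset.range (N + 1), f i
      = -1 / (q + 1) * (-q) ^ (-(N : ℤ)) + (N : ℝ) * (-(-q) ^ (-(N : ℤ))) := by
    rw [Finset.sum_range_succ']
    have hterm : ∀ i ∈ Finset.range N, f (i + 1) = -(-q) ^ (-(N : ℤ)) := by
      intro i hi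
      have hiN : i < N := Finset.mem_range.mp hi
      simp only [hf]
      rw [show min (0:ℤ) (((i + 1 : ℕ) : ℤ) - (N : ℤ)) = ((i:ℤ) + 1) - (N:ℤ) by push_cast; omega,
        cC_succ hq i, neg_mul, ← zpow_add₀ hne,
        show (-((i:ℤ) + 1) + (((i:ℤ) + 1) - (N:ℤ))) = -(N:ℤ) by ring]
    have hf0 : f 0 = -1 / (q + 1) * (-q) ^ (-(N : ℤ)) := by
      simp only [hf]
      rw [show min (0:ℤ) (((0 : ℕ) : ℤ) - (N : ℤ)) = -(N:ℤ) by push_cast; omega]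
      simp [cC]
    rw [Finset.sum_congr rfl hterm, Finset.sum_const, Finset.card_range, hf0, nsmul_eq_mul]
    ring
  rw [hS] at h2
  convert h2 using 1
  · rfl
  rw [show (-q) ^ (-((N:ℤ) + 1)) = (-q) ^ (-(N:ℤ)) * (-q)⁻¹ by
    rw [← zpow_neg_one, ← zpow_add₀ hne]; congr 1; ring]
  rw [inv_neg]
  field_simp
  ring

lemma core (hq : 1 < q) (e : ℤ) :
    HasSum (fun k : ℕ => cC q k * (-q) ^ (min 0 (e + (k : ℤ))))
      (((min 0 e : ℤ) : ℝ) * (-q) ^ (min 0 e)) := by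
  set N : ℕ := (-(min 0 e)).toNat with hN
  have hme : min 0 e = -(N : ℤ) := by omega
  have hfun : (fun k : ℕ => cC q k * (-q) ^ (min 0 (e + (k : ℤ))))
      = fun k : ℕ => cC q k * (-q) ^ (min 0 ((k:ℤ) - (N:ℤ))) := by
    funext k
    rw [show min (0:ℤ) (e + (k:ℤ)) = min 0 ((k:ℤ) - (N:ℤ)) by omega]
  rw [hfun, hme]
  have h := coreN hq N
  convert h using 2
  push_cast
  ring

lemma zpow_helper (x : ℝ) (hx : x ≠ 0) (B C : ℤ) (A : ℝ) :
    A * x ^ C * (x ^ (-4 : ℤ) * (x ^ B - x ^ 2 * x ^ C))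
      = A * x ^ (2 * C) * (x ^ (B - C - 4) - x ^ (-2 : ℤ)) := by
  have hB : x ^ B ≠ 0 := zpow_ne_zero _ hx
  have hC : x ^ C ≠ 0 := zpow_ne_zero _ hx
  rw [show (2:ℤ) * C = C + C by ring, zpow_add₀ hx,
      zpow_sub₀ hx, zpow_sub₀ hx,
      zpow_neg, zpow_neg,
      show (4:ℤ) = ((4:ℕ):ℤ) by norm_num, zpow_natCast,
      show (2:ℤ) = ((2:ℕ):ℤ) by norm_num, zpow_natCast]
  field_simp

lemma main_pos (hq : 1 < q) (e1 e2 : ℤ) (h1 : 0 ≤ e1) :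
    HasSum (fun k : ℕ =>
        cC q k * (-q) ^ (-4 : ℤ) * (F2 q e1 e2 k 1 - (-q) ^ 2 * F2 q e1 e2 k 0))
      (((min 0 e1 + min 0 e2 : ℤ) : ℝ) * (-q) ^ (2 * (min 0 e1 + min 0 e2)) *
        ((-q) ^ ((min 0 (e1 + 1) - min 0 e1) + (min 0 (e2 + 1) - min 0 e2) - 4)
          - (-q) ^ (-2 : ℤ))) := by
  have hne := hqne hq
  have h1a : min 0 (e1 + 1) = 0 := by omega
  have h1b : min 0 e1 = 0 := by omega
  have h := (core hq e2).mul_right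
    ((-q) ^ (-4 : ℤ) * ((-q) ^ (min 0 (e2 + 1)) - (-q) ^ 2 * (-q) ^ (min 0 e2)))
  convert h using 1
  · rfl
  · funext k
    simp only [F2]
    rw [show min 0 (e1+(k:ℤ)) + min 0 (e1+((1:ℕ):ℤ)) + min 0 (e2+(k:ℤ)) + min 0 (e2+((1:ℕ):ℤ))
          = min 0 (e2+(k:ℤ)) + min 0 (e2+1) by omega,
        show min 0 (e1+(k:ℤ)) + min 0 (e1+((0:ℕ):ℤ)) + min 0 (e2+(k:ℤ)) + min 0 (e2+((0:ℕ):ℤ))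
          = min 0 (e2+(k:ℤ)) + min 0 e2 by omega,
        zpow_add₀ hne, zpow_add₀ hne]
    ring
  · rw [h1a, h1b,
      show (0 + min 0 e2 : ℤ) = min 0 e2 by ring,
      show ((0 - 0 : ℤ) + (min 0 (e2+1) - min 0 e2) - 4 : ℤ) = min 0 (e2+1) - min 0 e2 - 4 by ring]
    exact (zpow_helper (-q) hne (min 0 (e2+1)) (min 0 e2) ((min 0 e2 : ℤ) : ℝ)).symm

lemma F2_symm (e1 e2 : ℤ) (l1 l2 : ℕ) : F2 q e1 e2 l1 l2 = F2 q e2 e1 l1 l2 := by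
  unfold F2
  congr 1
  ring

lemma main_hasSum (hq : 1 < q) (e1 e2 : ℤ) :
    HasSum (fun k : ℕ =>
        cC q k * (-q) ^ (-4 : ℤ) * (F2 q e1 e2 k 1 - (-q) ^ 2 * F2 q e1 e2 k 0))
      (((min 0 e1 + min 0 e2 : ℤ) : ℝ) * (-q) ^ (2 * (min 0 e1 + min 0 e2)) *
        ((-q) ^ ((min 0 (e1 + 1) - min 0 e1) + (min 0 (e2 + 1) - min 0 e2) - 4)
          - (-q) ^ (-2 : ℤ))) := by
  have hne := hqne hq
  rcases le_or_gt 0 e1 with h1 | h1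
  · exact main_pos hq e1 e2 h1
  rcases le_or_gt 0 e2 with h2 | h2
  · have h := main_pos hq e2 e1 h2
    have hfun : (fun k : ℕ =>
        cC q k * (-q) ^ (-4 : ℤ) * (F2 q e2 e1 k 1 - (-q) ^ 2 * F2 q e2 e1 k 0))
        = (fun k : ℕ =>
        cC q k * (-q) ^ (-4 : ℤ) * (F2 q e1 e2 k 1 - (-q) ^ 2 * F2 q e1 e2 k 0)) := by
      funext k
      rw [F2_symm e2 e1 k 1, F2_symm e2 e1 k 0]
    rw [hfun, show (min 0 e2 + min 0 e1 : ℤ) = min 0 e1 + min 0 e2 by ring,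
      show ((min 0 (e2+1) - min 0 e2) + (min 0 (e1+1) - min 0 e1) - 4 : ℤ)
        = (min 0 (e1+1) - min 0 e1) + (min 0 (e2+1) - min 0 e2) - 4 by ring] at h
    exact h
  · have hz : (fun k : ℕ =>
        cC q k * (-q) ^ (-4 : ℤ) * (F2 q e1 e2 k 1 - (-q) ^ 2 * F2 q e1 e2 k 0))
        = fun _ : ℕ => (0:ℝ) := by
      funext k
      have hF : F2 q e1 e2 k 1 - (-q) ^ 2 * F2 q e1 e2 k 0 = 0 := by
        simp only [F2]
        rw [show ((-q):ℝ)^2 = (-q)^(2:ℤ) by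
              rw [show (2:ℤ) = ((2:ℕ):ℤ) by norm_num, zpow_natCast],
          ← zpow_add₀ hne, sub_eq_zero]
        congr 1
        omega
      rw [hF, mul_zero]
    rw [hz, show ((min 0 (e1 + 1) - min 0 e1) + (min 0 (e2 + 1) - min 0 e2) - 4 : ℤ)
        = -2 by omega, sub_self, mul_zero]
    exact hasSum_zero

end Aux

theorem stmt12 (q : ℝ) (hq : 1 < q) (e1 e2 : ℤ) :
    Summable (fun k : ℕ =>
      |cC q k * (-q) ^ (-4 : ℤ) * (F2 q e1 e2 k 1 - (-q) ^ 2 * F2 q e1 e2 k 0)|) ∧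
    ((min 0 e1 + min 0 e2 : ℤ) : ℝ) * (-q) ^ (2 * (min 0 e1 + min 0 e2)) *
      ((-q) ^ ((min 0 (e1 + 1) - min 0 e1) + (min 0 (e2 + 1) - min 0 e2) - 4)
        - (-q) ^ (-2 : ℤ)) =
      ∑' k : ℕ, cC q k * (-q) ^ (-4 : ℤ) * (F2 q e1 e2 k 1 - (-q) ^ 2 * F2 q e1 e2 k 0) := by
  have h := main_hasSum hq e1 e2
  exact ⟨h.summable.abs, h.tsum_eq.symm⟩
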